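/- The prepend operation distributes over intersection and definitive union: for definitive sets X, Y, ▷(X ∩ Y) = ▷X ∩ ▷Y and ▷(X ⩁ Y) = ▷X ⩁ ▷Y. -/

import Mathlib

/-- A trace is a finite list of states or an infinite stream of states. -/
def Trace (σ : Type) := List σ ⊕ (ℕ → σ)

namespace Trace

variable {σ : Type}

/-- Concatenation of traces; if the first is infinite, the result is the first. -/
def app : Trace σ → Trace σ → Trace σ
  | Sum.inl l, Sum.inl l' => Sum.inl (l ++ l')
  | Sum.inl l, Sum.inr s =>
      Sum.inr (fun n => if h : n < l.length then l.get ⟨n, h⟩ else s (n - l.length))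
  | Sum.inr s, _ => Sum.inr s

instance : Append (Trace σ) := ⟨app⟩

/-- The empty trace ε. -/
def eps : Trace σ := Sum.inl []

/-- A trace is infinite iff it is a stream. -/
def Inf (t : Trace σ) : Prop := t.isRight

/-- Drop the first state of a trace. -/
def drop1 : Trace σ → Trace σ
  | Sum.inl [] => Sum.inl []
  | Sum.inl (_ :: l) => Sum.inl l
  | Sum.inr s => Sum.inr (fun n => s (n + 1))

/-- Drop the first `n` states of a trace. -/
def drop (t : Trace σ) (n : ℕ) : Trace σ := drop1^[n] t

/-- The first state of a trace, if any. -/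
def head? : Trace σ → Option σ
  | Sum.inl [] => none
  | Sum.inl (a :: _) => some a
  | Sum.inr s => some (s 0)

/-- The set of prefixes of a trace. -/
def pre (t : Trace σ) : Set (Trace σ) := {u | ∃ v, t = u ++ v}

/-- The set of prefixes of traces in a set: ↓X. -/
def preS (X : Set (Trace σ)) : Set (Trace σ) := ⋃ t ∈ X, pre t

/-- The set of extensions of a trace: ↑t. -/
def ext (t : Trace σ) : Set (Trace σ) := {u | ∃ v, u = t ++ v}

/-- The definitive prefixes of a set of traces: ↯X. -/
def dp (X : Set (Trace σ)) : Set (Trace σ) := {t | ext t ⊆ preS X}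

/-- A set of traces is definitive iff it equals its own set of definitive prefixes. -/
def Definitive (X : Set (Trace σ)) : Prop := X = dp X

/-- Definitive union ⩁ of a collection of trace sets. -/
def dUnionS (S : Set (Set (Trace σ))) : Set (Trace σ) := dp (⋃₀ S)

/-- Binary / indexed definitive union. -/
def dUnion (X Y : Set (Trace σ)) : Set (Trace σ) := dp (X ∪ Y)

def dUnionI {ι : Sort*} (X : ι → Set (Trace σ)) : Set (Trace σ) := dp (⋃ i, X i)

/-- The prepend operation ▷X. -/
def prepend (X : Set (Trace σ)) : Set (Trace σ) := {t | t.drop 1 ∈ X}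

/-- Σ^ω, the set of infinite traces. -/
def omegaSet (σ : Type) : Set (Trace σ) := {t | t.Inf}

/-- The first state of a trace, with the empty state as default. -/
def st0 {A : Type} (t : Trace (Set A)) : Set A := (t.head?).getD ∅

end Trace

/-- Syntax of LTL formulae over atomic propositions `A`. -/
inductive LTL (A : Type) where
  | top : LTL A
  | atom : A → LTL A
  | neg : LTL A → LTL A
  | and : LTL A → LTL A → LTL A
  | next : LTL A → LTL A
  | until_ : LTL A → LTL A → LTL A

namespace LTL

variable {A : Type}

open Trace

/-- Conventional LTL satisfaction on (infinite) traces. -/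
def Sat : Trace (Set A) → LTL A → Prop
  | t, .top => True
  | t, .atom a => a ∈ t.st0
  | t, .neg φ => ¬ Sat t φ
  | t, .and φ ψ => Sat t φ ∧ Sat t ψ
  | t, .next φ => Sat (t.drop 1) φ
  | t, .until_ φ ψ => ∃ i, Sat (t.drop i) ψ ∧ ∀ j < i, Sat (t.drop j) φ

/-- Answer-indexed family semantics of conventional LTL (sets of infinite traces). -/
def sem : LTL A → Bool → Set (Trace (Set A))
  | .top, true => omegaSet (Set A)
  | .top, false => ∅
  | .atom a, true => {t | t.Inf ∧ a ∈ t.st0}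
  | .atom a, false => {t | t.Inf ∧ a ∉ t.st0}
  | .neg φ, b => sem φ (!b)
  | .and φ ψ, true => sem φ true ∩ sem ψ true
  | .and φ ψ, false => sem φ false ∪ sem ψ false
  | .next φ, b => {t | t.drop 1 ∈ sem φ b}
  | .until_ φ ψ, true => {t | ∃ k, (∀ i < k, t.drop i ∈ sem φ true) ∧ t.drop k ∈ sem ψ true}
  | .until_ φ ψ, false => {t | ∀ k, (∃ i < k, t.drop i ∈ sem φ false) ∨ t.drop k ∈ sem ψ false}

/-- Answer-indexed family semantics of LTL₃ (definitive sets of finite-or-infinite traces). -/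
def sem3 : LTL A → Bool → Set (Trace (Set A))
  | .top, true => Set.univ
  | .top, false => ∅
  | .atom a, true => dp {t | t ≠ eps ∧ a ∈ t.st0}
  | .atom a, false => dp {t | t ≠ eps ∧ a ∉ t.st0}
  | .neg φ, b => sem3 φ (!b)
  | .and φ ψ, true => sem3 φ true ∩ sem3 ψ true
  | .and φ ψ, false => dUnion (sem3 φ false) (sem3 ψ false)
  | .next φ, b => prepend (sem3 φ b)
  | .until_ φ ψ, true =>
      dUnionI (fun k => (fun X => prepend X ∩ sem3 φ true)^[k] (sem3 ψ true))
  | .until_ φ ψ, false =>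
      ⋂ k, (fun X => dUnion (prepend X) (sem3 φ false))^[k] (sem3 ψ false)

end LTL

namespace Trace

variable {σ : Type}

/-- cons a state onto a trace -/
def cons (a : σ) (t : Trace σ) : Trace σ := app (Sum.inl [a]) t

lemma app_inr (f : ℕ → σ) (v : Trace σ) : app (Sum.inr f) v = Sum.inr f := rfl

lemma app_eps (t : Trace σ) : app t eps = t := by
  cases t with
  | inl l => show Sum.inl (l ++ []) = Sum.inl l; simp
  | inr f => rfl

lemma eps_app (t : Trace σ) : app eps t = t := by
  cases t with
  | inl l => rfl
  | inr f =>
    show Sum.inr _ = Sum.inr f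
    congr 1

lemma cons_inl (a : σ) (l : List σ) : (Sum.inl (a :: l) : Trace σ) = cons a (Sum.inl l) := rfl

lemma drop1_cons (a : σ) (t : Trace σ) : drop1 (cons a t) = t := by
  cases t with
  | inl l => rfl
  | inr f =>
    show Sum.inr _ = Sum.inr f
    congr 1

lemma cons_app (a : σ) (u v : Trace σ) : cons a (app u v) = app (cons a u) v := by
  cases u with
  | inl l =>
    cases v with
    | inl l' => rfl
    | inr f =>
      show Sum.inr _ = Sum.inr _
      congr 1; funext n
      cases n with
      | zero => simp [List.get]
      | succ m =>
        show (if h : m + 1 < 1 then _ else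
              if h : m + 1 - 1 < l.length then l.get ⟨m + 1 - 1, h⟩ else f (m + 1 - 1 - l.length))
            = (if h : m + 1 < l.length + 1 then (a :: l).get ⟨m + 1, h⟩
               else f (m + 1 - (l.length + 1)))
        simp only [Nat.add_sub_cancel]
        split_ifs with h1 h2 h2 <;> first
          | omega
          | rfl
          | (exfalso; omega)
          | (congr 1; omega)
  | inr f => rfl

lemma trace_cases (t : Trace σ) : t = eps ∨ ∃ a t', t = cons a t' := by
  cases t with
  | inl l =>
    cases l with
    | nil => exact Or.inl rfl
    | cons a l => exact Or.inr ⟨a, Sum.inl l, rfl⟩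
  | inr f =>
    refine Or.inr ⟨f 0, Sum.inr (fun n => f (n + 1)), ?_⟩
    show Sum.inr f = Sum.inr _
    congr 1; funext n
    cases n with
    | zero => simp
    | succ m =>
      show f (m + 1) = if h : m + 1 < 1 then _ else f (m + 1 - 1 + 1)
      simp

lemma mem_ext {t u : Trace σ} : u ∈ ext t ↔ ∃ v, u = app t v := Iff.rfl

lemma mem_pre {t u : Trace σ} : u ∈ pre t ↔ ∃ v, t = app u v := Iff.rfl

lemma mem_preS {X : Set (Trace σ)} {u : Trace σ} :
    u ∈ preS X ↔ ∃ s ∈ X, ∃ v, s = app u v := by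
  simp only [preS, Set.mem_iUnion, exists_prop]
  exact exists_congr fun s => and_congr_right fun _ => mem_pre

lemma mem_prepend {X : Set (Trace σ)} {t : Trace σ} : t ∈ prepend X ↔ drop1 t ∈ X := Iff.rfl

lemma mem_dp {X : Set (Trace σ)} {t : Trace σ} : t ∈ dp X ↔ ext t ⊆ preS X := Iff.rfl

/-- key lemma: prepend commutes with dp. -/
lemma prepend_dp (Z : Set (Trace σ)) :
    prepend (dp Z) = dp (prepend Z) := by
  ext t
  rw [mem_prepend, mem_dp, mem_dp]
  constructor
  · intro h u hu
    obtain ⟨v, hv⟩ := mem_ext.mp hu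
    rcases t with l | f
    · rcases l with _ | ⟨a, l⟩
      · -- t = eps
        rcases trace_cases u with rfl | ⟨b, u', rfl⟩
        · -- u = eps
          obtain ⟨s, hs, w, hw⟩ := mem_preS.mp (h (mem_ext.mpr ⟨eps, (app_eps _).symm⟩))
          rcases trace_cases s with rfl | ⟨b, s', rfl⟩
          · exact mem_preS.mpr ⟨eps, mem_prepend.mpr hs, eps, (eps_app _).symm⟩
          · refine mem_preS.mpr ⟨cons b (cons b s'), ?_, cons b (cons b s'), (eps_app _).symm⟩
            rw [mem_prepend, drop1_cons]; exact hs
        · -- u = cons b u'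
          have hm : u' ∈ ext (drop1 (Sum.inl [] : Trace σ)) :=
            mem_ext.mpr ⟨u', (eps_app _).symm⟩
          obtain ⟨s, hs, w, hw⟩ := mem_preS.mp (h hm)
          refine mem_preS.mpr ⟨cons b s, ?_, w, ?_⟩
          · rw [mem_prepend, drop1_cons]; exact hs
          · rw [hw, cons_app]
      · -- t = cons a (inl l)
        have hm : app (Sum.inl l) v ∈ ext (drop1 (Sum.inl (a :: l) : Trace σ)) :=
          mem_ext.mpr ⟨v, rfl⟩
        obtain ⟨s, hs, w, hw⟩ := mem_preS.mp (h hm)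
        refine mem_preS.mpr ⟨cons a s, ?_, w, ?_⟩
        · rw [mem_prepend, drop1_cons]; exact hs
        · rw [hv, hw]; exact (cons_app a _ w).trans (congrArg (fun x => app x w) (cons_app a (Sum.inl l : Trace σ) v))
    · -- t infinite
      have hm : drop1 (Sum.inr f : Trace σ) ∈ ext (drop1 (Sum.inr f : Trace σ)) :=
        mem_ext.mpr ⟨eps, (app_eps _).symm⟩
      obtain ⟨s, hs, w, hw⟩ := mem_preS.mp (h hm)
      have hsd : s = drop1 (Sum.inr f : Trace σ) := by rw [hw]; rfl
      refine mem_preS.mpr ⟨Sum.inr f, ?_, eps, ?_⟩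
      · show drop1 (Sum.inr f : Trace σ) ∈ Z; rw [← hsd]; exact hs
      · rw [hv]; rfl
  · intro h u hu
    obtain ⟨v, hv⟩ := mem_ext.mp hu
    rcases t with l | f
    · rcases l with _ | ⟨a, l⟩
      · -- t = eps, drop1 t = eps
        rcases trace_cases u with rfl | ⟨b, u', rfl⟩
        · obtain ⟨s, hs, w, hw⟩ := mem_preS.mp (h (mem_ext.mpr ⟨eps, (app_eps _).symm⟩))
          exact mem_preS.mpr ⟨drop1 s, mem_prepend.mp hs, drop1 s, (eps_app _).symm⟩
        · have hm : cons b (cons b u') ∈ ext (Sum.inl [] : Trace σ) :=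
            mem_ext.mpr ⟨cons b (cons b u'), (eps_app _).symm⟩
          obtain ⟨s, hs, w, hw⟩ := mem_preS.mp (h hm)
          refine mem_preS.mpr ⟨drop1 s, mem_prepend.mp hs, w, ?_⟩
          rw [hw, ← cons_app, drop1_cons]
      · -- t = inl (a :: l), u = app (inl l) v
        have hu' : u = app (Sum.inl l) v := hv
        have hm : cons a u ∈ ext (Sum.inl (a :: l) : Trace σ) := by
          refine mem_ext.mpr ⟨v, ?_⟩
          rw [hu']; exact cons_app a (Sum.inl l : Trace σ) v
        obtain ⟨s, hs, w, hw⟩ := mem_preS.mp (h hm)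
        refine mem_preS.mpr ⟨drop1 s, mem_prepend.mp hs, w, ?_⟩
        rw [hw, ← cons_app, drop1_cons]
    · -- t infinite
      obtain ⟨s, hs, w, hw⟩ := mem_preS.mp (h (mem_ext.mpr ⟨eps, (app_eps _).symm⟩))
      have hsf : s = Sum.inr f := by rw [hw]; rfl
      have hu : u = drop1 (Sum.inr f : Trace σ) := by rw [hv]; rfl
      refine mem_preS.mpr ⟨drop1 s, mem_prepend.mp hs, eps, ?_⟩
      rw [hu, app_eps, hsf]

end Trace

theorem prepend_distrib {σ : Type} (X Y : Set (Trace σ))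
    (hX : Trace.Definitive X) (hY : Trace.Definitive Y) :
    Trace.prepend (X ∩ Y) = Trace.prepend X ∩ Trace.prepend Y ∧
    Trace.prepend (Trace.dUnion X Y) =
      Trace.dUnion (Trace.prepend X) (Trace.prepend Y) := by
  constructor
  · rfl
  · show Trace.prepend (Trace.dp (X ∪ Y)) = Trace.dp (Trace.prepend X ∪ Trace.prepend Y)
    rw [Trace.prepend_dp]
    congr 1
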